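/- arXiv:1002.0607 — 6 statements merged into one kernel-verified Lean document; each statement's English description precedes it below -/
import Mathlib

section
/- Let m ∈ ℕ and let α be an m×m complex matrix with operator norm ‖α‖ < 1, ρ = (I_m − α*α)^{1/2}, ρ̃ = (I_m − αα*)^{1/2}, and set a = I_m + α, b = I_m − α. Then a*ρ̃^{−2}a = aρ^{−2}a*, b*ρ̃^{−2}b = bρ^{−2}b*, and a*ρ̃^{−2}b + aρ^{−2}b* = b*ρ̃^{−2}a + bρ^{−2}a* = 2·I_m. -/
open Matrix
open scoped Matrix.Norms.L2Operator ComplexOrder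

/-- For an `m × m` complex matrix `α` with operator norm `‖α‖ < 1`, with
`ρ = (I - αᴴα)^{1/2}`, `ρ̃ = (I - ααᴴ)^{1/2}`, `a = I + α`, `b = I - α`, one has
`aᴴ ρ̃⁻² a = a ρ⁻² aᴴ`, `bᴴ ρ̃⁻² b = b ρ⁻² bᴴ`, and
`aᴴ ρ̃⁻² b + a ρ⁻² bᴴ = bᴴ ρ̃⁻² a + b ρ⁻² aᴴ = 2 I`. -/
theorem cmv_ab_identities (m : ℕ) (α ρ ρt a b : Matrix (Fin m) (Fin m) ℂ)
    (hα : ‖α‖ < 1)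
    (hρ : ρ.PosSemidef) (hρ2 : ρ * ρ = 1 - αᴴ * α)
    (hρt : ρt.PosSemidef) (hρt2 : ρt * ρt = 1 - α * αᴴ)
    (ha : a = 1 + α) (hb : b = 1 - α) :
    aᴴ * (ρt ^ 2)⁻¹ * a = a * (ρ ^ 2)⁻¹ * aᴴ ∧
    bᴴ * (ρt ^ 2)⁻¹ * b = b * (ρ ^ 2)⁻¹ * bᴴ ∧
    aᴴ * (ρt ^ 2)⁻¹ * b + a * (ρ ^ 2)⁻¹ * bᴴ = (2 : ℂ) • (1 : Matrix (Fin m) (Fin m) ℂ) ∧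
    bᴴ * (ρt ^ 2)⁻¹ * a + b * (ρ ^ 2)⁻¹ * aᴴ = (2 : ℂ) • (1 : Matrix (Fin m) (Fin m) ℂ) := by
  subst ha hb
  rw [pow_two, pow_two, hρ2, hρt2]
  set U : Matrix (Fin m) (Fin m) ℂ := 1 - αᴴ * α with hU
  set V : Matrix (Fin m) (Fin m) ℂ := 1 - α * αᴴ with hV
  have hnormU : ‖αᴴ * α‖ < 1 := by
    calc ‖αᴴ * α‖ ≤ ‖αᴴ‖ * ‖α‖ := norm_mul_le _ _
    _ = ‖α‖ * ‖α‖ := by rw [Matrix.l2_opNorm_conjTranspose]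
    _ < 1 := by nlinarith [norm_nonneg α]
  have hnormV : ‖α * αᴴ‖ < 1 := by
    calc ‖α * αᴴ‖ ≤ ‖α‖ * ‖αᴴ‖ := norm_mul_le _ _
    _ = ‖α‖ * ‖α‖ := by rw [Matrix.l2_opNorm_conjTranspose]
    _ < 1 := by nlinarith [norm_nonneg α]
  have hUu : IsUnit U := ⟨Units.oneSub _ hnormU, rfl⟩
  have hVu : IsUnit V := ⟨Units.oneSub _ hnormV, rfl⟩
  have hUd : IsUnit U.det := (Matrix.isUnit_iff_isUnit_det U).mp hUu
  have hVd : IsUnit V.det := (Matrix.isUnit_iff_isUnit_det V).mp hVu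
  have hUi : U * U⁻¹ = 1 := Matrix.mul_nonsing_inv U hUd
  have hUi' : U⁻¹ * U = 1 := Matrix.nonsing_inv_mul U hUd
  have hVi : V * V⁻¹ = 1 := Matrix.mul_nonsing_inv V hVd
  have hVi' : V⁻¹ * V = 1 := Matrix.nonsing_inv_mul V hVd
  have hUh : Uᴴ = U := by rw [hU]; simp [Matrix.conjTranspose_sub, Matrix.conjTranspose_mul]
  have hVh : Vᴴ = V := by rw [hV]; simp [Matrix.conjTranspose_sub, Matrix.conjTranspose_mul]
  have hc : α * U = V * α := by rw [hU, hV]; noncomm_ring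
  have e3 : V⁻¹ * α = α * U⁻¹ := by
    calc V⁻¹ * α = V⁻¹ * α * (U * U⁻¹) := by rw [hUi, mul_one]
    _ = V⁻¹ * (α * U) * U⁻¹ := by noncomm_ring
    _ = V⁻¹ * (V * α) * U⁻¹ := by rw [hc]
    _ = α * U⁻¹ := by rw [← mul_assoc, hVi', one_mul]
  have e4 : αᴴ * V⁻¹ = U⁻¹ * αᴴ := by
    have h := congrArg Matrix.conjTranspose e3
    simp only [Matrix.conjTranspose_mul, Matrix.conjTranspose_nonsing_inv, hVh, hUh] at h
    exact h
  have e1 : αᴴ * V⁻¹ * α = U⁻¹ - 1 := by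
    rw [e4, mul_assoc]
    have h : αᴴ * α = 1 - U := by rw [hU]; abel
    rw [h, mul_sub, mul_one, hUi']
  have e2 : α * U⁻¹ * αᴴ = V⁻¹ - 1 := by
    rw [← e3, mul_assoc]
    have h : α * αᴴ = 1 - V := by rw [hV]; abel
    rw [h, mul_sub, mul_one, hVi']
  refine ⟨?_, ?_, ?_, ?_⟩
  · have l : (1 + α)ᴴ * V⁻¹ * (1 + α) = V⁻¹ + V⁻¹ * α + αᴴ * V⁻¹ + αᴴ * V⁻¹ * α := by
      simp only [Matrix.conjTranspose_add, Matrix.conjTranspose_one]; noncomm_ring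
    have r : (1 + α) * U⁻¹ * (1 + α)ᴴ = U⁻¹ + U⁻¹ * αᴴ + α * U⁻¹ + α * U⁻¹ * αᴴ := by
      simp only [Matrix.conjTranspose_add, Matrix.conjTranspose_one]; noncomm_ring
    rw [l, r, e1, e2, e3, e4]; abel
  · have l : (1 - α)ᴴ * V⁻¹ * (1 - α) = V⁻¹ - V⁻¹ * α - αᴴ * V⁻¹ + αᴴ * V⁻¹ * α := by
      simp only [Matrix.conjTranspose_sub, Matrix.conjTranspose_one]; noncomm_ring
    have r : (1 - α) * U⁻¹ * (1 - α)ᴴ = U⁻¹ - U⁻¹ * αᴴ - α * U⁻¹ + α * U⁻¹ * αᴴ := by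
      simp only [Matrix.conjTranspose_sub, Matrix.conjTranspose_one]; noncomm_ring
    rw [l, r, e1, e2, e3, e4]; abel
  · have l : (1 + α)ᴴ * V⁻¹ * (1 - α) = V⁻¹ - V⁻¹ * α + αᴴ * V⁻¹ - αᴴ * V⁻¹ * α := by
      simp only [Matrix.conjTranspose_add, Matrix.conjTranspose_one]; noncomm_ring
    have r : (1 + α) * U⁻¹ * (1 - α)ᴴ = U⁻¹ - U⁻¹ * αᴴ + α * U⁻¹ - α * U⁻¹ * αᴴ := by
      simp only [Matrix.conjTranspose_sub, Matrix.conjTranspose_one]; noncomm_ring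
    rw [l, r, e1, e2, e3, e4, two_smul]; abel
  · have l : (1 - α)ᴴ * V⁻¹ * (1 + α) = V⁻¹ + V⁻¹ * α - αᴴ * V⁻¹ - αᴴ * V⁻¹ * α := by
      simp only [Matrix.conjTranspose_sub, Matrix.conjTranspose_one]; noncomm_ring
    have r : (1 - α) * U⁻¹ * (1 + α)ᴴ = U⁻¹ + U⁻¹ * αᴴ - α * U⁻¹ - α * U⁻¹ * αᴴ := by
      simp only [Matrix.conjTranspose_add, Matrix.conjTranspose_one]; noncomm_ring
    rw [l, r, e1, e2, e3, e4, two_smul]; abel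
end

section
/- Let α ∈ ℂ with |α| < 1, ρ = (1 − |α|²)^{1/2}, and let t₁, t₂ ∈ ℝ. Set w = i(α e^{−it₂/2} − e^{it₂/2}) (which is nonzero). Then the 2×2 complex matrix A = [[e^{it₁} − α, ρ], [ρ, conj(α) − e^{−it₂}]] has rank 1 if e^{it₁} = w/conj(w), and has rank 2 otherwise; in particular rank(A) ≥ 1 always. -/
open Matrix Complex
open ComplexConjugate

lemma aux_rank_one (A : Matrix (Fin 2) (Fin 2) ℂ) (hdet : A.det = 0)
    (i j : Fin 2) (hij : A i j ≠ 0) : A.rank = 1 := by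
  have hsum := LinearMap.finrank_range_add_finrank_ker A.mulVecLin
  rw [Module.finrank_fin_fun] at hsum
  have hrank : A.rank = Module.finrank ℂ (LinearMap.range A.mulVecLin) := rfl
  obtain ⟨v, hv0, hv⟩ := (Matrix.exists_mulVec_eq_zero_iff).mpr hdet
  have hker : 0 < Module.finrank ℂ (LinearMap.ker A.mulVecLin) := by
    rw [Module.finrank_pos_iff]
    refine ⟨⟨v, by simpa [Matrix.mulVecLin_apply] using hv⟩, 0, ?_⟩
    intro h
    apply hv0
    simpa using congrArg Subtype.val h
  have hrange : 0 < Module.finrank ℂ (LinearMap.range A.mulVecLin) := by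
    rw [Module.finrank_pos_iff]
    refine ⟨⟨A.mulVec (Pi.single j 1), ⟨Pi.single j 1, rfl⟩⟩, 0, ?_⟩
    intro h
    apply hij
    have hval : A.mulVec (Pi.single j 1) = 0 := congrArg Subtype.val h
    simpa [Matrix.mulVec_single] using congrFun hval i
  rw [hrank]
  omega

/-- For `α ∈ ℂ` with `|α| < 1`, `ρ = (1 - |α|²)^{1/2}`, `t₁ t₂ ∈ ℝ`, and
`w = i(α e^{-it₂/2} - e^{it₂/2})` (nonzero), the matrix
`A = [[e^{it₁} - α, ρ], [ρ, conj α - e^{-it₂}]]` has rank 1 if `e^{it₁} = w/conj w`,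
rank 2 otherwise; in particular `rank A ≥ 1`. -/
theorem cmv_decoupling_rank (α : ℂ) (hα : ‖α‖ < 1)
    (ρ : ℝ) (hρ : ρ = Real.sqrt (1 - ‖α‖ ^ 2)) (t₁ t₂ : ℝ) (w : ℂ)
    (hw : w = Complex.I * (α * Complex.exp (-Complex.I * (t₂ / 2)) -
            Complex.exp (Complex.I * (t₂ / 2))))
    (A : Matrix (Fin 2) (Fin 2) ℂ)
    (hA : A = !![Complex.exp (Complex.I * t₁) - α, (ρ : ℂ);
                 (ρ : ℂ), conj α - Complex.exp (-Complex.I * t₂)]) :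
    w ≠ 0 ∧
    (Complex.exp (Complex.I * t₁) = w / conj w → A.rank = 1) ∧
    (Complex.exp (Complex.I * t₁) ≠ w / conj w → A.rank = 2) ∧
    1 ≤ A.rank := by
  set z := Complex.exp (Complex.I * t₁) with hz
  set u := Complex.exp (Complex.I * (t₂ / 2 : ℂ)) with hu
  set e := Complex.exp (Complex.I * t₂) with he
  have hue : u * u = e := by
    rw [hu, he, ← Complex.exp_add]
    ring_nf
  have hu0 : u ≠ 0 := Complex.exp_ne_zero _
  have he0 : e ≠ 0 := Complex.exp_ne_zero _
  have habse : ‖e‖ = 1 := by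
    rw [he, mul_comm]; exact Complex.norm_exp_ofReal_mul_I t₂
  have hae : α - e ≠ 0 := by
    intro h
    rw [sub_eq_zero.mp h, habse] at hα
    exact lt_irrefl _ hα
  have hden : (1 : ℂ) - conj α * e ≠ 0 := by
    intro h
    have h1 : conj α * e = 1 := by linear_combination -h
    have h2 := congrArg (‖·‖) h1
    simp [_root_.map_mul, habse, Complex.norm_conj] at h2
    rw [h2] at hα
    exact lt_irrefl _ hα
  have huinv : Complex.exp (-Complex.I * (t₂ / 2 : ℂ)) = u⁻¹ := by
    rw [hu, neg_mul, Complex.exp_neg]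
  have heinv : Complex.exp (-Complex.I * (t₂ : ℂ)) = e⁻¹ := by
    rw [he, neg_mul, Complex.exp_neg]
  have hcu : conj u = u⁻¹ := by
    rw [hu, ← Complex.exp_conj, ← Complex.exp_neg]
    congr 1
    rw [show ((t₂ : ℂ) / 2) = ((t₂ / 2 : ℝ) : ℂ) by push_cast; ring]
    simp [_root_.map_mul, map_ofNat, Complex.conj_I, Complex.conj_ofReal]
  have hce : conj e = e⁻¹ := by
    rw [he, ← Complex.exp_conj, ← Complex.exp_neg]
    congr 1
    simp [_root_.map_mul, Complex.conj_I, Complex.conj_ofReal]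
  have hwf : w = Complex.I * u⁻¹ * (α - e) := by
    rw [hw, huinv, ← hue]
    field_simp
  have hw0 : w ≠ 0 := by
    rw [hwf]
    exact mul_ne_zero (mul_ne_zero Complex.I_ne_zero (inv_ne_zero hu0)) hae
  have hcw : conj w = Complex.I * u⁻¹ * (1 - conj α * e) := by
    rw [hwf]
    simp only [_root_.map_mul, map_sub, map_inv₀, Complex.conj_I, hcu, hce, inv_inv]
    rw [← hue]
    field_simp
    ring
  have hdivw : w / conj w = (α - e) / (1 - conj α * e) := by
    rw [hcw, hwf, mul_div_mul_left _ _ (mul_ne_zero Complex.I_ne_zero (inv_ne_zero hu0))]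
  have hiff : z = w / conj w ↔ z * (1 - conj α * e) = α - e := by
    rw [hdivw, eq_div_iff hden]
  have hρ2 : (ρ : ℂ) * ρ = 1 - α * conj α := by
    have h1 : (ρ : ℝ) ^ 2 = 1 - ‖α‖ ^ 2 := by
      rw [hρ]
      exact Real.sq_sqrt (by nlinarith [norm_nonneg α])
    have h2 : α * conj α = ((‖α‖ ^ 2 : ℝ) : ℂ) := by
      rw [Complex.mul_conj]
      norm_cast
      rw [Complex.sq_norm]
    rw [h2, ← Complex.ofReal_mul]
    rw [show (ρ:ℝ) * ρ = ρ ^ 2 by ring, h1]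
    push_cast
    ring
  have hdet : A.det = -(e⁻¹) * (z * (1 - conj α * e) - (α - e)) := by
    rw [hA, Matrix.det_fin_two_of, heinv, hρ2]
    field_simp
    ring
  have hdetiff : A.det = 0 ↔ z = w / conj w := by
    rw [hdet, hiff, mul_eq_zero, sub_eq_zero]
    simp [he0]
  have hρpos : (0 : ℝ) < ρ := by
    rw [hρ]
    exact Real.sqrt_pos.mpr (by nlinarith [norm_nonneg α])
  have hA10 : A 1 0 ≠ 0 := by
    rw [hA]
    simp only [Matrix.of_apply, Matrix.cons_val', Matrix.cons_val_zero, Matrix.empty_val',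
      Matrix.cons_val_fin_one, Matrix.cons_val_one, Matrix.head_cons, Matrix.head_fin_const]
    exact_mod_cast hρpos.ne'
  have hr1 : z = w / conj w → A.rank = 1 := fun h =>
    aux_rank_one A (hdetiff.mpr h) 1 0 hA10
  have hr2 : z ≠ w / conj w → A.rank = 2 := by
    intro h
    have hdu : IsUnit A := A.isUnit_iff_isUnit_det.mpr
      (isUnit_iff_ne_zero.mpr (fun h0 => h (hdetiff.mp h0)))
    have := Matrix.rank_of_isUnit A hdu
    simpa using this
  refine ⟨hw0, hr1, hr2, ?_⟩
  by_cases h : z = w / conj w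
  · rw [hr1 h]
  · rw [hr2 h]; omega
end

section
/- Let {α_k}_{k∈ℤ} ⊂ ℂ with |α_k| < 1 for all k, and ρ_k = (1 − |α_k|²)^{1/2}. Fix an odd integer k₀ and t₁, t₂ ∈ ℝ, and set w = i(α_{k₀} e^{−it₂/2} − e^{it₂/2}) (≠ 0). Let V, W, W′ be unitary bounded operators on the Hilbert space ℓ²(ℤ, ℂ) with standard orthonormal basis (δ_k)_{k∈ℤ}, whose matrix entries ⟨δ_j, ·δ_k⟩ are as follows: V is block diagonal with, for each k ∈ ℤ, the 2×2 block Θ_{2k} = [[−α_{2k}, ρ_{2k}], [ρ_{2k}, conj(α_{2k})]] occupying rows and columns (2k−1, 2k), and all other entries zero; W is block diagonal with, for each k ∈ ℤ, the block Θ_{2k+1} = [[−α_{2k+1}, ρ_{2k+1}], [ρ_{2k+1}, conj(α_{2k+1})]] occupying rows and columns (2k, 2k+1), and all other entries zero; W′ has the same matrix entries as W except that the block occupying rows and columns (k₀−1, k₀) is replaced by [[−e^{it₁}, 0], [0, e^{−it₂}]]. Set U = V∘W and U′ = V∘W′. Then the range of U − U′ is finite-dimensional, of dimension 1 if e^{it₁}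 = w/conj(w), and of dimension 2 otherwise. Moreover, for any z ∈ ℂ such that U − zI and U′ − zI are boundedly invertible, the range of (U − zI)^{−1} − (U′ − zI)^{−1} has the same dimension as the range of U − U′. -/
open Complex Matrix
open ComplexConjugate

noncomputable section

/-- The Hilbert space `ℓ²(ℤ, ℂ)`. -/
abbrev CMVl2 : Type := lp (fun _ : ℤ => ℂ) 2

/-- The matrix entry `⟨δ_j, T δ_k⟩` of a bounded operator `T` on `ℓ²(ℤ, ℂ)` in the
standard orthonormal basis. -/
def cmvEntry (T : CMVl2 →L[ℂ] CMVl2) (j k : ℤ) : ℂ :=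
  inner ℂ (lp.single 2 j (1 : ℂ)) (T (lp.single 2 k (1 : ℂ)))

lemma cmv_coord (T : CMVl2 →L[ℂ] CMVl2) (j k : ℤ) :
    cmvEntry T j k = T (lp.single 2 k (1 : ℂ)) j := by
  rw [cmvEntry, lp.inner_single_left]
  simp [RCLike.inner_apply]

lemma cmv_dense_span :
    Dense ((Submodule.span ℂ (Set.range fun k : ℤ => lp.single 2 k (1 : ℂ)) :
      Submodule ℂ CMVl2) : Set CMVl2) := by
  intro f
  have h := lp.hasSum_single (E := fun _ : ℤ => ℂ) (p := 2) (by norm_num) f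
  refine mem_closure_of_tendsto h (Filter.Eventually.of_forall fun s => ?_)
  refine Submodule.sum_mem _ fun i _ => ?_
  have : lp.single (E := fun _ : ℤ => ℂ) 2 i (f i) = f i • lp.single 2 i (1 : ℂ) := by
    rw [← lp.single_smul]
    simp
  rw [this]
  exact Submodule.smul_mem _ _ (Submodule.subset_span ⟨i, rfl⟩)

lemma rng_comp_surj (f g : CMVl2 →L[ℂ] CMVl2) (hs : Function.Surjective g) :
    LinearMap.range ((f ∘L g : CMVl2 →L[ℂ] CMVl2) : CMVl2 →ₗ[ℂ] CMVl2) = LinearMap.range (f : CMVl2 →ₗ[ℂ] CMVl2) := by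
  ext x
  simp only [LinearMap.mem_range, ContinuousLinearMap.coe_coe, ContinuousLinearMap.coe_comp', Function.comp_apply]
  constructor
  · rintro ⟨y, rfl⟩; exact ⟨g y, rfl⟩
  · rintro ⟨y, rfl⟩; obtain ⟨z, rfl⟩ := hs y; exact ⟨z, rfl⟩

lemma rng_comp_map (f g : CMVl2 →L[ℂ] CMVl2) :
    LinearMap.range ((f ∘L g : CMVl2 →L[ℂ] CMVl2) : CMVl2 →ₗ[ℂ] CMVl2) = Submodule.map (f : CMVl2 →ₗ[ℂ] CMVl2) (LinearMap.range (g : CMVl2 →ₗ[ℂ] CMVl2)) := by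
  ext x
  simp only [LinearMap.mem_range, ContinuousLinearMap.coe_coe, ContinuousLinearMap.coe_comp', Function.comp_apply,
    Submodule.mem_map]
  constructor
  · rintro ⟨y, rfl⟩; exact ⟨g y, ⟨y, rfl⟩, rfl⟩
  · rintro ⟨_, ⟨y, rfl⟩, rfl⟩; exact ⟨y, rfl⟩

lemma rng_neg (f : CMVl2 →L[ℂ] CMVl2) :
    LinearMap.range ((-f : CMVl2 →L[ℂ] CMVl2) : CMVl2 →ₗ[ℂ] CMVl2) = LinearMap.range (f : CMVl2 →ₗ[ℂ] CMVl2) := by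
  ext x
  simp only [LinearMap.mem_range, ContinuousLinearMap.coe_coe, ContinuousLinearMap.neg_apply]
  constructor
  · rintro ⟨y, rfl⟩; exact ⟨-y, by simp⟩
  · rintro ⟨y, rfl⟩; exact ⟨-y, by simp⟩

lemma finrank_map_inj (f : CMVl2 →L[ℂ] CMVl2) (hf : Function.Injective f)
    (p : Submodule ℂ CMVl2) :
    Module.finrank ℂ (Submodule.map (f : CMVl2 →ₗ[ℂ] CMVl2) p) = Module.finrank ℂ p :=
  ((Submodule.equivMapOfInjective (f : CMVl2 →ₗ[ℂ] CMVl2) hf p).finrank_eq).symm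

lemma fd_map_inj (f : CMVl2 →L[ℂ] CMVl2) (hf : Function.Injective f)
    (p : Submodule ℂ CMVl2) [FiniteDimensional ℂ p] :
    FiniteDimensional ℂ (Submodule.map (f : CMVl2 →ₗ[ℂ] CMVl2) p) :=
  LinearEquiv.finiteDimensional (Submodule.equivMapOfInjective (f : CMVl2 →ₗ[ℂ] CMVl2) hf p)

set_option maxHeartbeats 1600000 in
/-- Decoupling a full-lattice CMV operator `U = V ∘ W` at an odd site `k₀` gives a
perturbation `U - U'` of rank one if `e^{it₁} = w/conj w` (with
`w = i(α_{k₀} e^{-it₂/2} - e^{it₂/2})`), of rank two otherwise; the same holds for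
the resolvent difference at any point `z` of bounded invertibility. -/
theorem cmv_decoupling_full_lattice
    (α : ℤ → ℂ) (hα : ∀ k, ‖α k‖ < 1)
    (ρ : ℤ → ℝ) (hρ : ∀ k, ρ k = Real.sqrt (1 - ‖α k‖ ^ 2))
    (k₀ : ℤ) (hk₀ : Odd k₀) (t₁ t₂ : ℝ) (w : ℂ)
    (hw : w = Complex.I * (α k₀ * Complex.exp (-Complex.I * (t₂ / 2)) -
            Complex.exp (Complex.I * (t₂ / 2))))
    (V W W' : CMVl2 →L[ℂ] CMVl2)
    (hVnorm : ∀ x, ‖V x‖ = ‖x‖) (hVsurj : Function.Surjective V)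
    (hWnorm : ∀ x, ‖W x‖ = ‖x‖) (hWsurj : Function.Surjective W)
    (hW'norm : ∀ x, ‖W' x‖ = ‖x‖) (hW'surj : Function.Surjective W')
    (hVblk : ∀ k : ℤ,
      cmvEntry V (2*k-1) (2*k-1) = -α (2*k) ∧
      cmvEntry V (2*k-1) (2*k) = (ρ (2*k) : ℂ) ∧
      cmvEntry V (2*k) (2*k-1) = (ρ (2*k) : ℂ) ∧
      cmvEntry V (2*k) (2*k) = conj (α (2*k)))
    (hVzero : ∀ j k : ℤ,
      (∀ l : ℤ, ¬ ((j = 2*l-1 ∨ j = 2*l) ∧ (k = 2*l-1 ∨ k = 2*l))) → cmvEntry V j k = 0)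
    (hWblk : ∀ k : ℤ,
      cmvEntry W (2*k) (2*k) = -α (2*k+1) ∧
      cmvEntry W (2*k) (2*k+1) = (ρ (2*k+1) : ℂ) ∧
      cmvEntry W (2*k+1) (2*k) = (ρ (2*k+1) : ℂ) ∧
      cmvEntry W (2*k+1) (2*k+1) = conj (α (2*k+1)))
    (hWzero : ∀ j k : ℤ,
      (∀ l : ℤ, ¬ ((j = 2*l ∨ j = 2*l+1) ∧ (k = 2*l ∨ k = 2*l+1))) → cmvEntry W j k = 0)
    (hW'eq : ∀ j k : ℤ,
      ¬ ((j = k₀-1 ∨ j = k₀) ∧ (k = k₀-1 ∨ k = k₀)) → cmvEntry W' j k = cmvEntry W j k)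
    (hW'blk : cmvEntry W' (k₀-1) (k₀-1) = -Complex.exp (Complex.I * t₁) ∧
      cmvEntry W' (k₀-1) k₀ = 0 ∧ cmvEntry W' k₀ (k₀-1) = 0 ∧
      cmvEntry W' k₀ k₀ = Complex.exp (-Complex.I * t₂)) :
    FiniteDimensional ℂ (LinearMap.range ((V ∘L W - V ∘L W' : CMVl2 →L[ℂ] CMVl2) : CMVl2 →ₗ[ℂ] CMVl2)) ∧
    (Complex.exp (Complex.I * t₁) = w / conj w →
      Module.finrank ℂ (LinearMap.range ((V ∘L W - V ∘L W' : CMVl2 →L[ℂ] CMVl2) : CMVl2 →ₗ[ℂ] CMVl2)) = 1) ∧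
    (Complex.exp (Complex.I * t₁) ≠ w / conj w →
      Module.finrank ℂ (LinearMap.range ((V ∘L W - V ∘L W' : CMVl2 →L[ℂ] CMVl2) : CMVl2 →ₗ[ℂ] CMVl2)) = 2) ∧
    (∀ z : ℂ, IsUnit (V ∘L W - z • (1 : CMVl2 →L[ℂ] CMVl2)) →
      IsUnit (V ∘L W' - z • (1 : CMVl2 →L[ℂ] CMVl2)) →
      FiniteDimensional ℂ (LinearMap.range
        ((Ring.inverse (V ∘L W - z • (1 : CMVl2 →L[ℂ] CMVl2)) -
         Ring.inverse (V ∘L W' - z • (1 : CMVl2 →L[ℂ] CMVl2)) : CMVl2 →L[ℂ] CMVl2) : CMVl2 →ₗ[ℂ] CMVl2)) ∧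
      Module.finrank ℂ (LinearMap.range
        ((Ring.inverse (V ∘L W - z • (1 : CMVl2 →L[ℂ] CMVl2)) -
         Ring.inverse (V ∘L W' - z • (1 : CMVl2 →L[ℂ] CMVl2)) : CMVl2 →L[ℂ] CMVl2) : CMVl2 →ₗ[ℂ] CMVl2)) =
        Module.finrank ℂ (LinearMap.range ((V ∘L W - V ∘L W' : CMVl2 →L[ℂ] CMVl2) : CMVl2 →ₗ[ℂ] CMVl2))) := by
  obtain ⟨m, hm⟩ := hk₀
  set x : ℂ := Complex.exp (Complex.I * t₁) with hx
  set a : ℂ := x - α k₀ with ha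
  set b : ℂ := conj (α k₀) - Complex.exp (-Complex.I * t₂) with hb
  set r : ℂ := (ρ k₀ : ℂ) with hrdef
  set e₁ : CMVl2 := lp.single 2 (k₀ - 1) (1 : ℂ) with he₁
  set e₂ : CMVl2 := lp.single 2 k₀ (1 : ℂ) with he₂
  set u : CMVl2 := a • e₁ + r • e₂ with hu
  set v : CMVl2 := r • e₁ + b • e₂ with hv
  -- basic facts about r
  have hρpos : 0 < ρ k₀ := by
    rw [hρ]
    apply Real.sqrt_pos.2
    nlinarith [hα k₀, norm_nonneg (α k₀)]
  have hr : r ≠ 0 := by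
    rw [hrdef]
    exact_mod_cast hρpos.ne'
  have hr2 : r ^ 2 = 1 - α k₀ * conj (α k₀) := by
    have h1 : (ρ k₀ : ℝ) ^ 2 = 1 - ‖α k₀‖ ^ 2 := by
      rw [hρ]
      exact Real.sq_sqrt (by nlinarith [hα k₀, norm_nonneg (α k₀)])
    have h2 : α k₀ * conj (α k₀) = (‖α k₀‖ ^ 2 : ℝ) := by
      rw [Complex.mul_conj]
      norm_cast
      rw [Complex.sq_norm]
    rw [hrdef, h2]
    exact_mod_cast h1
  -- coordinates of combinations
  have hcoord : ∀ (c d : ℂ) (j : ℤ), (c • e₁ + d • e₂) j =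
      (if j = k₀ - 1 then c else 0) + (if j = k₀ then d else 0) := by
    intro c d j
    have : ((c • e₁ + d • e₂ : CMVl2) : ∀ _ : ℤ, ℂ) j = c • (e₁ j) + d • (e₂ j) := by
      rw [lp.coeFn_add, Pi.add_apply, lp.coeFn_smul, lp.coeFn_smul, Pi.smul_apply, Pi.smul_apply]
    rw [this, he₁, he₂]
    by_cases h1 : j = k₀ - 1
    · subst h1
      rw [lp.single_apply_self, lp.single_apply_ne 2 k₀ _ (by omega : k₀ - 1 ≠ k₀)]
      simp
    · rw [lp.single_apply_ne 2 (k₀-1) _ h1, if_neg h1]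
      by_cases h2 : j = k₀
      · subst h2; rw [lp.single_apply_self]; simp
      · rw [lp.single_apply_ne 2 k₀ _ h2, if_neg h2]; simp
  -- column of W - W' outside the block
  have hcol : ∀ k : ℤ, k ≠ k₀ - 1 → k ≠ k₀ →
      (W - W') (lp.single 2 k (1 : ℂ)) = 0 := by
    intro k h1 h2
    apply lp.ext
    funext j
    have h := (hW'eq j k (by tauto)).symm
    rw [cmv_coord, cmv_coord] at h
    have : ((W - W') (lp.single 2 k (1:ℂ)) : ∀ _ : ℤ, ℂ) j
        = W (lp.single 2 k (1:ℂ)) j - W' (lp.single 2 k (1:ℂ)) j := by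
      rw [ContinuousLinearMap.sub_apply, lp.coeFn_sub, Pi.sub_apply]
    rw [lp.coeFn_zero, this, h, sub_self]
    rfl
  -- the two nontrivial columns
  have hDe₁ : (W - W') e₁ = u := by
    apply lp.ext
    funext j
    have hsub : ((W - W') e₁ : ∀ _ : ℤ, ℂ) j
        = cmvEntry W j (k₀ - 1) - cmvEntry W' j (k₀ - 1) := by
      rw [cmv_coord, cmv_coord, he₁, ContinuousLinearMap.sub_apply, lp.coeFn_sub, Pi.sub_apply]
    have hru : (u : ∀ _ : ℤ, ℂ) j =
        (if j = k₀ - 1 then a else 0) + (if j = k₀ then r else 0) := hcoord a r j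
    rw [hsub, hru]
    by_cases h1 : j = k₀ - 1
    · subst h1
      have hWe : cmvEntry W (k₀-1) (k₀-1) = -α k₀ := by
        have := (hWblk m).1
        rw [show (2*m+1 : ℤ) = k₀ by omega, show (2*m : ℤ) = k₀ - 1 by omega] at this
        rw [this]
      rw [hWe, hW'blk.1]
      simp [hx, ha]
      ring
    · by_cases h2 : j = k₀
      · have hWe : cmvEntry W k₀ (k₀-1) = r := by
          have := (hWblk m).2.2.1
          rw [show (2*m+1 : ℤ) = k₀ by omega, show (2*m : ℤ) = k₀ - 1 by omega] at this
          rw [this, hrdef]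
        rw [h2, hWe, hW'blk.2.2.1, if_neg (by omega : ¬ (k₀:ℤ) = k₀ - 1), if_pos rfl]
        simp
      · have hWe : cmvEntry W j (k₀-1) = 0 := by
          apply hWzero
          intro l ⟨hj, hk⟩
          omega
        have hW'e : cmvEntry W' j (k₀-1) = 0 := by
          rw [hW'eq j (k₀-1) (by tauto), hWe]
        rw [hWe, hW'e, if_neg h1, if_neg h2]
        simp
  have hDe₂ : (W - W') e₂ = v := by
    apply lp.ext
    funext j
    have hsub : ((W - W') e₂ : ∀ _ : ℤ, ℂ) j
        = cmvEntry W j k₀ - cmvEntry W' j k₀ := by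
      rw [cmv_coord, cmv_coord, he₂, ContinuousLinearMap.sub_apply, lp.coeFn_sub, Pi.sub_apply]
    have hrv : (v : ∀ _ : ℤ, ℂ) j =
        (if j = k₀ - 1 then r else 0) + (if j = k₀ then b else 0) := hcoord r b j
    rw [hsub, hrv]
    by_cases h1 : j = k₀ - 1
    · subst h1
      have hWe : cmvEntry W (k₀-1) k₀ = r := by
        have := (hWblk m).2.1
        rw [show (2*m+1 : ℤ) = k₀ by omega, show (2*m : ℤ) = k₀ - 1 by omega] at this
        rw [this, hrdef]
      rw [hWe, hW'blk.2.1]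
      simp [if_neg (by omega : (k₀:ℤ) - 1 ≠ k₀)]
    · by_cases h2 : j = k₀
      · have hWe : cmvEntry W k₀ k₀ = conj (α k₀) := by
          have := (hWblk m).2.2.2
          rw [show (2*m+1 : ℤ) = k₀ by omega] at this
          rw [this]
        rw [h2, hWe, hW'blk.2.2.2, if_neg (by omega : ¬ (k₀:ℤ) = k₀ - 1), if_pos rfl]
        simp [hb]
      · have hWe : cmvEntry W j k₀ = 0 := by
          apply hWzero
          intro l ⟨hj, hk⟩
          omega
        have hW'e : cmvEntry W' j k₀ = 0 := by
          rw [hW'eq j k₀ (by tauto), hWe]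
        rw [hWe, hW'e, if_neg h1, if_neg h2]
        simp
  -- D = T, a rank ≤ 2 operator
  set T : CMVl2 →L[ℂ] CMVl2 :=
    ((innerSL ℂ e₁).smulRight u) + ((innerSL ℂ e₂).smulRight v) with hT
  have hTapp : ∀ y : CMVl2, T y = (inner ℂ e₁ y : ℂ) • u + (inner ℂ e₂ y : ℂ) • v := by
    intro y
    rw [hT]
    simp
  have hDT : W - W' = T := by
    apply ContinuousLinearMap.ext_on cmv_dense_span
    rintro y ⟨k, rfl⟩
    beta_reduce
    rw [hTapp]
    have hi1 : (inner ℂ e₁ (lp.single 2 k (1:ℂ)) : ℂ) = if k₀ - 1 = k then 1 else 0 := by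
      rw [he₁, lp.inner_single_left]
      by_cases h : k₀ - 1 = k
      · subst h; rw [lp.single_apply_self]; simp [RCLike.inner_apply]
      · rw [lp.single_apply_ne 2 k _ h]
        simp [RCLike.inner_apply, if_neg h]
    have hi2 : (inner ℂ e₂ (lp.single 2 k (1:ℂ)) : ℂ) = if k₀ = k then 1 else 0 := by
      rw [he₂, lp.inner_single_left]
      by_cases h : k₀ = k
      · subst h; rw [lp.single_apply_self]; simp [RCLike.inner_apply]
      · rw [lp.single_apply_ne 2 k _ h]
        simp [RCLike.inner_apply, if_neg h]
    rw [hi1, hi2]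
    by_cases h1 : k = k₀ - 1
    · subst h1
      rw [if_pos rfl, if_neg (by omega)]
      rw [← he₁, hDe₁]
      simp
    · by_cases h2 : k = k₀
      · subst h2
        rw [if_neg (by omega), if_pos rfl, ← he₂, hDe₂]
        simp
      · rw [if_neg (by omega), if_neg (by omega), hcol k h1 h2]
        simp
  -- injectivity of V
  have hVinj : Function.Injective V := by
    intro p q h
    have h2 : ‖V (p - q)‖ = ‖p - q‖ := hVnorm _
    rw [map_sub, h, sub_self, norm_zero] at h2
    exact sub_eq_zero.1 (norm_eq_zero.1 h2.symm)
  -- range computation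
  have hD2 : V ∘L W - V ∘L W' = V ∘L (W - W') := by
    ext y
    simp
  have hrngD : LinearMap.range ((W - W' : CMVl2 →L[ℂ] CMVl2) : CMVl2 →ₗ[ℂ] CMVl2) = Submodule.span ℂ {u, v} := by
    apply le_antisymm
    · rintro p ⟨y, rfl⟩
      rw [hDT, ContinuousLinearMap.coe_coe, hTapp]
      exact Submodule.add_mem _
        (Submodule.smul_mem _ _ (Submodule.subset_span (Set.mem_insert u {v})))
        (Submodule.smul_mem _ _ (Submodule.subset_span (by simp)))
    · rw [Submodule.span_le]
      rintro p hp
      rcases hp with rfl | hp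
      · exact ⟨e₁, hDe₁⟩
      · rw [Set.mem_singleton_iff] at hp
        subst hp
        exact ⟨e₂, hDe₂⟩
  have hrngD2 : LinearMap.range ((V ∘L W - V ∘L W' : CMVl2 →L[ℂ] CMVl2) : CMVl2 →ₗ[ℂ] CMVl2) =
      Submodule.map (V : CMVl2 →ₗ[ℂ] CMVl2) (Submodule.span ℂ {u, v}) := by
    rw [hD2, rng_comp_map, hrngD]
  -- finrank of the span
  haveI : FiniteDimensional ℂ (Submodule.span ℂ ({u, v} : Set CMVl2)) :=
    FiniteDimensional.span_of_finite ℂ (Set.toFinite _)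
  haveI hFD : FiniteDimensional ℂ (LinearMap.range ((V ∘L W - V ∘L W' : CMVl2 →L[ℂ] CMVl2) : CMVl2 →ₗ[ℂ] CMVl2)) := by
    rw [hrngD2]
    exact fd_map_inj V hVinj _
  have hrank : Module.finrank ℂ (LinearMap.range ((V ∘L W - V ∘L W' : CMVl2 →L[ℂ] CMVl2) : CMVl2 →ₗ[ℂ] CMVl2)) =
      Module.finrank ℂ (Submodule.span ℂ ({u, v} : Set CMVl2)) := by
    rw [hrngD2]
    exact finrank_map_inj V hVinj _
  -- nonvanishing of u
  have hu0 : u ≠ 0 := by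
    intro h
    have h1 : (u : ∀ _ : ℤ, ℂ) k₀ = r := by
      rw [hu, hcoord a r k₀, if_neg (by omega : ¬ (k₀:ℤ) = k₀ - 1), if_pos rfl, zero_add]
    rw [h, lp.coeFn_zero] at h1
    exact hr h1.symm
  -- the determinant condition
  set S : ℂ := Complex.exp (Complex.I * (t₂ / 2)) with hS
  set S' : ℂ := Complex.exp (-Complex.I * (t₂ / 2)) with hS'
  have hSS' : S * S' = 1 := by
    rw [hS, hS', ← Complex.exp_add, show Complex.I * (↑t₂/2) + -Complex.I * (↑t₂/2) = 0 by ring,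
      Complex.exp_zero]
  have ht2 : Complex.exp (-Complex.I * t₂) = S' * S' := by
    rw [hS', ← Complex.exp_add]
    congr 1
    ring
  have hcast : (↑t₂/2 : ℂ) = ((t₂/2 : ℝ) : ℂ) := by push_cast; ring
  have hcS' : conj S' = S := by
    rw [hS', hS, ← Complex.exp_conj]
    congr 1
    rw [hcast]
    simp [_root_.map_mul, Complex.conj_I, Complex.conj_ofReal, map_ofNat]
  have hcS : conj S = S' := by
    rw [hS, hS', ← Complex.exp_conj]
    congr 1
    rw [hcast]
    simp [_root_.map_mul, Complex.conj_I, Complex.conj_ofReal, map_ofNat]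
  have hconjw : conj w = -Complex.I * (conj (α k₀) * S - S') := by
    rw [hw]
    simp only [_root_.map_mul, map_sub, Complex.conj_I, hcS', hcS]
  have hS1 : ‖S‖ = 1 := by
    rw [hS, show Complex.I * (↑t₂/2) = ((t₂/2 : ℝ) : ℂ) * Complex.I by push_cast; ring]
    exact Complex.norm_exp_ofReal_mul_I _
  have hS'1 : ‖S'‖ = 1 := by
    rw [hS', show -Complex.I * (↑t₂/2) = ((-(t₂/2) : ℝ) : ℂ) * Complex.I by push_cast; ring]
    exact Complex.norm_exp_ofReal_mul_I _
  have hw0 : w ≠ 0 := by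
    rw [hw]
    refine mul_ne_zero Complex.I_ne_zero (sub_ne_zero.2 fun h => ?_)
    have := congrArg norm h
    rw [norm_mul, hS'1, hS1, mul_one] at this
    exact absurd this (hα k₀).ne
  have hcw0 : conj w ≠ 0 := by
    intro h
    apply hw0
    simpa using congrArg conj h
  have hkey : x * conj w - w = -Complex.I * S * (a * b - r ^ 2) := by
    rw [hconjw, hw, ha, hb, hr2, ht2]
    linear_combination (-Complex.I * S' * (x - α k₀)) * hSS'
  have hdet_iff : (a * b - r ^ 2 = 0) ↔ x = w / conj w := by
    constructor
    · intro h
      have h2 : x * conj w - w = 0 := by rw [hkey, h, mul_zero]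
      rw [eq_div_iff hcw0]
      linear_combination h2
    · intro h
      have h2 : x * conj w - w = 0 := by
        rw [h, div_mul_cancel₀ _ hcw0, sub_self]
      have h3 := hkey.symm.trans h2
      rcases mul_eq_zero.1 h3 with h4 | h4
      · exact absurd h4 (mul_ne_zero (neg_ne_zero.2 Complex.I_ne_zero) (Complex.exp_ne_zero _))
      · exact h4
  -- finrank in the two cases
  have hspan_rank : (x = w / conj w →
        Module.finrank ℂ (Submodule.span ℂ ({u, v} : Set CMVl2)) = 1) ∧
      (x ≠ w / conj w →
        Module.finrank ℂ (Submodule.span ℂ ({u, v} : Set CMVl2)) = 2) := by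
    constructor
    · intro h
      have hdet : a * b - r ^ 2 = 0 := hdet_iff.2 h
      have hvdep : v = (b / r) • u := by
        rw [hv, hu, smul_add, smul_smul, smul_smul]
        congr 1
        · congr 1
          field_simp
          linear_combination -hdet
        · congr 1
          field_simp
      have hspan : Submodule.span ℂ ({u, v} : Set CMVl2) = Submodule.span ℂ {u} := by
        apply le_antisymm
        · rw [Submodule.span_le]
          rintro p hp
          rcases hp with rfl | hp
          · exact Submodule.subset_span rfl
          · rw [Set.mem_singleton_iff] at hp
            subst hp
            rw [hvdep]
            exact Submodule.smul_mem _ _ (Submodule.subset_span rfl)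
        · exact Submodule.span_mono (by simp)
      rw [hspan]
      exact finrank_span_singleton hu0
    · intro h
      have hdet : a * b - r ^ 2 ≠ 0 := fun hc => h (hdet_iff.1 hc)
      have hind : LinearIndependent ℂ ![u, v] := by
        rw [LinearIndependent.pair_iff]
        intro s t hst
        have hcomb : s • u + t • v = (s*a + t*r) • e₁ + (s*r + t*b) • e₂ := by
          rw [hu, hv]
          module
        have h1 : ((s*a + t*r) • e₁ + (s*r + t*b) • e₂ : CMVl2) = 0 := by
          rw [← hcomb, hst]
        have hc1 : s*a + t*r = 0 := by
          have h2 := hcoord (s*a + t*r) (s*r + t*b) (k₀-1)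
          rw [h1, if_pos rfl, if_neg (by omega : ¬ (k₀:ℤ) - 1 = k₀), add_zero] at h2
          simpa using h2.symm
        have hc2 : s*r + t*b = 0 := by
          have h2 := hcoord (s*a + t*r) (s*r + t*b) k₀
          rw [h1, if_neg (by omega : ¬ (k₀:ℤ) = k₀ - 1), if_pos rfl, zero_add] at h2
          simpa using h2.symm
        have hs0 : s = 0 := by
          have h5 : s * (a*b - r^2) = 0 := by linear_combination b * hc1 - r * hc2
          rcases mul_eq_zero.1 h5 with h6 | h6
          · exact h6
          · exact absurd h6 hdet
        refine ⟨hs0, ?_⟩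
        rw [hs0, zero_mul, zero_add] at hc1
        rcases mul_eq_zero.1 hc1 with h6 | h6
        · exact h6
        · exact absurd h6 hr
      have hrange : Set.range ![u, v] = ({u, v} : Set CMVl2) := by
        ext p
        simp only [Set.mem_range, Set.mem_insert_iff, Set.mem_singleton_iff, Fin.exists_fin_two,
          Matrix.cons_val_zero, Matrix.cons_val_one, Matrix.head_cons]
        constructor
        · rintro (rfl | rfl)
          · exact Or.inl rfl
          · exact Or.inr rfl
        · rintro (rfl | rfl)
          · exact Or.inl rfl
          · exact Or.inr rfl
      have := finrank_span_eq_card hind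
      rw [hrange] at this
      rw [this]
      simp
  refine ⟨hFD, ?_, ?_, ?_⟩
  · intro h
    rw [hrank]
    exact hspan_rank.1 h
  · intro h
    rw [hrank]
    exact hspan_rank.2 h
  -- resolvent part
  · intro z hA hB
    obtain ⟨au, hau⟩ := hA
    obtain ⟨bu, hbu⟩ := hB
    have hinv : Ring.inverse (V ∘L W - z • (1 : CMVl2 →L[ℂ] CMVl2)) -
        Ring.inverse (V ∘L W' - z • (1 : CMVl2 →L[ℂ] CMVl2)) =
        -((au⁻¹ : (CMVl2 →L[ℂ] CMVl2)ˣ) ∘L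
          ((V ∘L W - V ∘L W') ∘L (bu⁻¹ : (CMVl2 →L[ℂ] CMVl2)ˣ))) := by
      rw [← hau, ← hbu, Ring.inverse_unit, Ring.inverse_unit]
      have key : ((au⁻¹ : (CMVl2 →L[ℂ] CMVl2)ˣ) : CMVl2 →L[ℂ] CMVl2) *
          (((bu : (CMVl2 →L[ℂ] CMVl2)ˣ) : CMVl2 →L[ℂ] CMVl2) - au) * bu⁻¹ =
          ((au⁻¹ : (CMVl2 →L[ℂ] CMVl2)ˣ) : CMVl2 →L[ℂ] CMVl2) - bu⁻¹ := by
        rw [mul_sub, Units.inv_mul, sub_mul, one_mul, mul_assoc, Units.mul_inv, mul_one]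
      rw [← key, hau, hbu]
      have hBA : (V ∘L W' - z • (1 : CMVl2 →L[ℂ] CMVl2)) -
          (V ∘L W - z • (1 : CMVl2 →L[ℂ] CMVl2)) = -(V ∘L W - V ∘L W') := by
        abel
      rw [hBA]
      rw [ContinuousLinearMap.mul_def, ContinuousLinearMap.mul_def]
      ext y
      simp
    have hbinv_surj : Function.Surjective
        ((bu⁻¹ : (CMVl2 →L[ℂ] CMVl2)ˣ) : CMVl2 →L[ℂ] CMVl2) := by
      intro y
      refine ⟨(bu : CMVl2 →L[ℂ] CMVl2) y, ?_⟩
      rw [← ContinuousLinearMap.mul_apply, Units.inv_mul, ContinuousLinearMap.one_apply]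
    have hainv_inj : Function.Injective
        ((au⁻¹ : (CMVl2 →L[ℂ] CMVl2)ˣ) : CMVl2 →L[ℂ] CMVl2) := by
      intro p q h
      have : ∀ y, (au : CMVl2 →L[ℂ] CMVl2)
          (((au⁻¹ : (CMVl2 →L[ℂ] CMVl2)ˣ) : CMVl2 →L[ℂ] CMVl2) y) = y := by
        intro y
        rw [← ContinuousLinearMap.mul_apply, Units.mul_inv, ContinuousLinearMap.one_apply]
      rw [← this p, ← this q, h]
    have hrng : LinearMap.range
        ((Ring.inverse (V ∘L W - z • (1 : CMVl2 →L[ℂ] CMVl2)) -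
         Ring.inverse (V ∘L W' - z • (1 : CMVl2 →L[ℂ] CMVl2)) : CMVl2 →L[ℂ] CMVl2) : CMVl2 →ₗ[ℂ] CMVl2) =
        Submodule.map ((((au⁻¹ : (CMVl2 →L[ℂ] CMVl2)ˣ) : CMVl2 →L[ℂ] CMVl2)) : CMVl2 →ₗ[ℂ] CMVl2)
          (LinearMap.range ((V ∘L W - V ∘L W' : CMVl2 →L[ℂ] CMVl2) : CMVl2 →ₗ[ℂ] CMVl2)) := by
      rw [hinv, rng_neg, rng_comp_map, rng_comp_surj _ _ hbinv_surj]
    constructor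
    · rw [hrng]
      exact fd_map_inj _ hainv_inj _
    · rw [hrng]
      exact finrank_map_inj _ hainv_inj _

end
end

section
/- Let m ∈ ℕ, let α be an m×m complex matrix with operator norm ‖α‖ < 1, ρ = (I_m − α*α)^{1/2}, ρ̃ = (I_m − αα*)^{1/2}, and let γ be an m×m unitary matrix. If ξ ∈ ℂ^m and c ∈ ℂ satisfy (γ − α)ξ + c·ρ̃ξ = 0 and ρξ + c·(α* − γ*)ξ = 0, then ξ = 0. In other words, the kernel of the 2m×2m block matrix A = [[γ − α, ρ̃], [ρ, α* − γ*]] contains no nonzero vector of the form (ξ, cξ). -/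
open Matrix
open scoped Matrix.Norms.L2Operator ComplexOrder

/-- For an `m × m` complex matrix `α` with `‖α‖ < 1`, `ρ = (I - αᴴα)^{1/2}`,
`ρ̃ = (I - ααᴴ)^{1/2}`, and a unitary `γ`: if `ξ ∈ ℂ^m` and `c ∈ ℂ` satisfy
`(γ - α)ξ + c ρ̃ ξ = 0` and `ρ ξ + c (αᴴ - γᴴ) ξ = 0`, then `ξ = 0`; i.e. the kernel of
`[[γ - α, ρ̃], [ρ, αᴴ - γᴴ]]` contains no nonzero vector of the form `(ξ, cξ)`. -/
theorem cmv_decoupling_kernel_no_graph_vector (m : ℕ) (α ρ ρt γ : Matrix (Fin m) (Fin m) ℂ)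
    (hα : ‖α‖ < 1)
    (hρ : ρ.PosSemidef) (hρ2 : ρ * ρ = 1 - αᴴ * α)
    (hρt : ρt.PosSemidef) (hρt2 : ρt * ρt = 1 - α * αᴴ)
    (hγ : γ * γᴴ = 1 ∧ γᴴ * γ = 1)
    (ξ : Fin m → ℂ) (c : ℂ)
    (h1 : (γ - α) *ᵥ ξ + c • (ρt *ᵥ ξ) = 0)
    (h2 : ρ *ᵥ ξ + c • ((αᴴ - γᴴ) *ᵥ ξ) = 0) :
    ξ = 0 := by
  have key : ∀ M : Matrix (Fin m) (Fin m) ℂ,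
      star (star ξ ⬝ᵥ (M *ᵥ ξ)) = star ξ ⬝ᵥ (Mᴴ *ᵥ ξ) := by
    intro M
    rw [← star_dotProduct_star, star_star, star_mulVec, dotProduct_mulVec]
  set P := star ξ ⬝ᵥ (ρ *ᵥ ξ) with hP
  set Q := star ξ ⬝ᵥ (ρt *ᵥ ξ) with hQ
  set A := star ξ ⬝ᵥ ((γ - α) *ᵥ ξ) with hA
  have eq1 : A + c * Q = 0 := by
    have := congrArg (fun v => star ξ ⬝ᵥ v) h1
    simpa [smul_eq_mul] using this
  have eq2 : P + c * (star ξ ⬝ᵥ ((αᴴ - γᴴ) *ᵥ ξ)) = 0 := by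
    have := congrArg (fun v => star ξ ⬝ᵥ v) h2
    simpa [smul_eq_mul] using this
  have hA' : A = star ξ ⬝ᵥ (γ *ᵥ ξ) - star ξ ⬝ᵥ (α *ᵥ ξ) := by
    rw [hA, sub_mulVec, dotProduct_sub]
  have hAs : star ξ ⬝ᵥ ((αᴴ - γᴴ) *ᵥ ξ) = - star A := by
    rw [sub_mulVec, dotProduct_sub, hA', star_sub, key γ, key α]
    ring
  -- P is real
  have hPstar : star P = P := by
    rw [hP, key, hρ.1]
  have hPeq : P = star c * A := by
    have h' : P = c * star A := by
      rw [hAs] at eq2; linear_combination eq2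
    calc P = star P := hPstar.symm
    _ = star (c * star A) := by rw [h']
    _ = star c * A := by rw [star_mul', star_star]
  have hAeq : A = -(c * Q) := by linear_combination eq1
  have hsum : P + (star c * c) * Q = 0 := by
    rw [hPeq, hAeq]; ring
  have hPnn : 0 ≤ P := hρ.dotProduct_mulVec_nonneg ξ
  have hQnn : 0 ≤ (star c * c) * Q := mul_nonneg (star_mul_self_nonneg c) (hρt.dotProduct_mulVec_nonneg ξ)
  have hP0 : P = 0 := by
    rcases (add_eq_zero_iff_of_nonneg hPnn hQnn).mp hsum with ⟨h, _⟩
    exact h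
  have hρξ : ρ *ᵥ ξ = 0 := (hρ.dotProduct_mulVec_zero_iff ξ).mp hP0
  have hξeq : ξ = αᴴ *ᵥ (α *ᵥ ξ) := by
    have h0 : (ρ * ρ) *ᵥ ξ = 0 := by
      rw [← mulVec_mulVec, hρξ, mulVec_zero]
    rw [hρ2, sub_mulVec, one_mulVec, sub_eq_zero] at h0
    rw [← mulVec_mulVec] at h0
    exact h0
  by_contra hne
  set x : EuclideanSpace ℂ (Fin m) := (EuclideanSpace.equiv (Fin m) ℂ).symm ξ with hx
  have hx0 : 0 < ‖x‖ := by
    rw [norm_pos_iff]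
    exact fun h => hne (congrArg (EuclideanSpace.equiv (Fin m) ℂ) h)
  have hxeq : x = (EuclideanSpace.equiv (Fin m) ℂ).symm (αᴴ *ᵥ (α *ᵥ ξ)) := by
    rw [hx]; exact congrArg _ hξeq
  have b1 : ‖(EuclideanSpace.equiv (Fin m) ℂ).symm (α *ᵥ ξ)‖ ≤ ‖α‖ * ‖x‖ :=
    α.l2_opNorm_mulVec x
  have b2 : ‖x‖ ≤ ‖α‖ * ‖(EuclideanSpace.equiv (Fin m) ℂ).symm (α *ᵥ ξ)‖ := by
    rw [hxeq]
    have := αᴴ.l2_opNorm_mulVec ((EuclideanSpace.equiv (Fin m) ℂ).symm (α *ᵥ ξ))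
    rwa [α.l2_opNorm_conjTranspose] at this
  have hα0 : 0 ≤ ‖α‖ := norm_nonneg _
  have b3 : ‖x‖ ≤ ‖α‖ * (‖α‖ * ‖x‖) :=
    b2.trans (mul_le_mul_of_nonneg_left b1 hα0)
  have b5 : ‖α‖ * ‖x‖ < ‖x‖ := by
    simpa using mul_lt_mul_of_pos_right hα hx0
  have b4 : ‖α‖ * (‖α‖ * ‖x‖) ≤ ‖α‖ * ‖x‖ :=
    mul_le_mul_of_nonneg_left b5.le hα0
  linarith
end

section
/- Let m ∈ ℕ, let β₁, …, β_m ∈ ℂ with |β_j| < 1, set κ_j = (1 − |β_j|²)^{1/2}, and let t₁, …, t_m, s₁, …, s_m ∈ ℝ. Put β = diag(β₁, …, β_m), κ = diag(κ₁, …, κ_m), θ₁ = diag(e^{it₁}, …, e^{it_m}), θ₂ = diag(e^{is₁}, …, e^{is_m}), and let B be the 2m×2m block matrix B = [[θ₁ − β, κ], [κ, β* − θ₂*]]. Then rank(B) ≥ m, and rank(B) = m if and only if for every j ∈ {1, …, m} one has e^{it_j} = w_j/conj(w_j), where w_j = i(β_j e^{−is_j/2} − e^{is_j/2}) (≠ 0);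 equivalently, if and only if e^{it_j}·conj(β_j) + e^{−is_j}·β_j − e^{i(t_j−s_j)} − 1 = 0 for every j. -/
open Matrix Complex
open ComplexConjugate

private lemma cmv_rank_aux (m : ℕ) (a d kc : Fin m → ℂ) (hkc : ∀ j, kc j ≠ 0)
    (B : Matrix (Fin m ⊕ Fin m) (Fin m ⊕ Fin m) ℂ)
    (hB : B = fromBlocks (diagonal a) (diagonal kc) (diagonal kc) (diagonal d)) :
    B.rank = m + Fintype.card {j // kc j ^ 2 - a j * d j ≠ 0} := by
  classical
  set x : Fin m → ℂ := fun j => (kc j ^ 2 - a j * d j) * kc j with hx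
  set E : Matrix (Fin m ⊕ Fin m) (Fin m ⊕ Fin m) ℂ :=
    fromBlocks (diagonal kc) (diagonal fun j => -(a j)) 0 1 with hE
  set F : Matrix (Fin m ⊕ Fin m) (Fin m ⊕ Fin m) ℂ :=
    fromBlocks 1 (diagonal fun j => -(d j)) 0 (diagonal kc) with hF
  have hEu : IsUnit E.det := by
    rw [hE, det_fromBlocks_zero₂₁, det_diagonal, det_one, mul_one, isUnit_iff_ne_zero]
    exact Finset.prod_ne_zero_iff.mpr fun j _ => hkc j
  have hFu : IsUnit F.det := by
    rw [hF, det_fromBlocks_zero₂₁, det_diagonal, det_one, one_mul, isUnit_iff_ne_zero]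
    exact Finset.prod_ne_zero_iff.mpr fun j _ => hkc j
  have hEBF : E * B * F = fromBlocks 0 (diagonal x) (diagonal kc) 0 := by
    rw [hE, hF, hB, fromBlocks_multiply, fromBlocks_multiply]
    ext (i | i) (k | k) <;>
      rcases eq_or_ne i k with rfl | hik <;>
      simp_all [Matrix.mul_apply, Matrix.diagonal_apply, Finset.sum_ite_eq] <;>
      ring
  have h1 : (E * B * F).rank = B.rank := by
    rw [rank_mul_eq_left_of_isUnit_det _ _ hFu, rank_mul_eq_right_of_isUnit_det _ _ hEu]
  have h2 : ((fromBlocks 0 (diagonal x) (diagonal kc) 0).submatrix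
      (Equiv.sumComm (Fin m) (Fin m)) (Equiv.refl _)) = diagonal (Sum.elim kc x) := by
    rw [← fromBlocks_diagonal]
    ext (i | i) (k | k) <;>
      simp [fromBlocks, submatrix, Equiv.sumComm]
  have h3 : B.rank = (diagonal (Sum.elim kc x)).rank := by
    rw [← h2, rank_submatrix, ← hEBF, h1]
  rw [h3, rank_diagonal]
  rw [Fintype.card_congr (Equiv.subtypeSum), Fintype.card_sum]
  congr 1
  · rw [Fintype.card_congr (Equiv.subtypeUnivEquiv (fun j => by simp [hkc j]))]
    simp
  · exact Fintype.card_congr (Equiv.subtypeEquivRight (fun j => by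
      simp [hx, mul_eq_zero, hkc j]))

/-- For `β₁,…,β_m ∈ ℂ` with `|β_j| < 1`, `κ_j = (1 - |β_j|²)^{1/2}`, and real phases
`t_j, s_j`, the block matrix `B = [[θ₁ - β, κ], [κ, βᴴ - θ₂ᴴ]]` (all blocks diagonal)
has `rank B ≥ m`, with `rank B = m` iff `e^{it_j} = w_j/conj w_j` for every `j`
(where `w_j = i(β_j e^{-is_j/2} - e^{is_j/2}) ≠ 0`), equivalently iff
`e^{it_j} conj β_j + e^{-is_j} β_j - e^{i(t_j - s_j)} - 1 = 0` for every `j`. -/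
theorem cmv_diagonal_block_rank (m : ℕ) (β : Fin m → ℂ) (hβ : ∀ j, ‖β j‖ < 1)
    (κ : Fin m → ℝ) (hκ : ∀ j, κ j = Real.sqrt (1 - ‖β j‖ ^ 2))
    (t s : Fin m → ℝ) (w : Fin m → ℂ)
    (hw : ∀ j, w j = Complex.I * (β j * Complex.exp (-Complex.I * (s j / 2)) -
            Complex.exp (Complex.I * (s j / 2))))
    (B : Matrix (Fin m ⊕ Fin m) (Fin m ⊕ Fin m) ℂ)
    (hB : B = fromBlocks
      (diagonal (fun j => Complex.exp (Complex.I * t j)) - diagonal β)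
      (diagonal (fun j => (κ j : ℂ)))
      (diagonal (fun j => (κ j : ℂ)))
      ((diagonal β)ᴴ - (diagonal (fun j => Complex.exp (Complex.I * s j)))ᴴ)) :
    (∀ j, w j ≠ 0) ∧
    m ≤ B.rank ∧
    (B.rank = m ↔ ∀ j, Complex.exp (Complex.I * t j) = w j / conj (w j)) ∧
    (B.rank = m ↔ ∀ j, Complex.exp (Complex.I * t j) * conj (β j) +
      Complex.exp (-Complex.I * s j) * β j -
      Complex.exp (Complex.I * (t j - s j)) - 1 = 0) := by
  classical
  -- scalar preliminaries
  have hκpos : ∀ j, (0 : ℝ) < κ j := by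
    intro j
    rw [hκ j]
    apply Real.sqrt_pos.mpr
    nlinarith [hβ j, norm_nonneg (β j)]
  have hkc : ∀ j, ((κ j : ℂ)) ≠ 0 := fun j => by exact_mod_cast (hκpos j).ne'
  have hkcsq : ∀ j, ((κ j : ℂ)) ^ 2 = 1 - β j * conj (β j) := by
    intro j
    have h1 : (κ j) ^ 2 = 1 - ‖β j‖ ^ 2 := by
      rw [hκ j, Real.sq_sqrt]
      nlinarith [hβ j, norm_nonneg (β j)]
    have h2 : (β j) * conj (β j) = ((‖β j‖ ^ 2 : ℝ) : ℂ) := by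
      rw [Complex.mul_conj, Complex.sq_norm]
    calc ((κ j : ℂ)) ^ 2 = ((κ j ^ 2 : ℝ) : ℂ) := by push_cast; ring
      _ = ((1 - ‖β j‖ ^ 2 : ℝ) : ℂ) := by rw [h1]
      _ = 1 - ((‖β j‖ ^ 2 : ℝ) : ℂ) := by push_cast; ring
      _ = 1 - β j * conj (β j) := by rw [← h2]
  -- nonvanishing of w
  have hw0 : ∀ j, w j ≠ 0 := by
    intro j h
    rw [hw j] at h
    rcases mul_eq_zero.mp h with h | h
    · exact Complex.I_ne_zero h
    · have h2 : β j * Complex.exp (-Complex.I * (s j / 2)) =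
          Complex.exp (Complex.I * (s j / 2)) := sub_eq_zero.mp h
      have h3 := congrArg (fun z : ℂ => ‖z‖) h2
      simp [_root_.map_mul, Complex.norm_exp] at h3
      exact absurd h3 (ne_of_lt (hβ j))
  -- the per-index scalar equivalence
  have hscal : ∀ j, (Complex.exp (Complex.I * t j) = w j / conj (w j) ↔
      Complex.exp (Complex.I * t j) * conj (β j) + Complex.exp (-Complex.I * s j) * β j -
        Complex.exp (Complex.I * (t j - s j)) - 1 = 0) := by
    intro j
    have e1 : Complex.exp (-Complex.I * s j) * Complex.exp (Complex.I * (s j / 2))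
        = Complex.exp (-Complex.I * (s j / 2)) := by
      rw [← Complex.exp_add]; congr 1; ring
    have e2 : Complex.exp (Complex.I * (t j - s j)) * Complex.exp (Complex.I * (s j / 2))
        = Complex.exp (Complex.I * t j) * Complex.exp (-Complex.I * (s j / 2)) := by
      rw [← Complex.exp_add, ← Complex.exp_add]; congr 1; ring
    have hcw : conj (w j) = -Complex.I * (conj (β j) * Complex.exp (Complex.I * (s j / 2)) -
        Complex.exp (-Complex.I * (s j / 2))) := by
      rw [hw j]
      simp only [_root_.map_mul, map_sub, map_neg, map_div₀, map_ofNat, Complex.conj_I,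
        Complex.conj_ofReal, ← Complex.exp_conj]
      ring_nf
    have hcw0 : conj (w j) ≠ 0 := by
      intro h; apply hw0 j; simpa using congrArg conj h
    have hkey : Complex.exp (Complex.I * t j) * conj (w j) - w j
        = -Complex.I * Complex.exp (Complex.I * (s j / 2)) *
          (Complex.exp (Complex.I * t j) * conj (β j) +
            Complex.exp (-Complex.I * s j) * β j -
            Complex.exp (Complex.I * (t j - s j)) - 1) := by
      rw [hcw, hw j]
      linear_combination (Complex.I * β j) * e1 - Complex.I * e2
    rw [eq_div_iff hcw0, ← sub_eq_zero, hkey]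
    constructor
    · intro h
      rcases mul_eq_zero.mp h with h | h
      · rcases mul_eq_zero.mp h with h | h
        · exact absurd (neg_eq_zero.mp h) Complex.I_ne_zero
        · exact absurd h (Complex.exp_ne_zero _)
      · exact h
    · intro h; rw [h, mul_zero]
  -- the matrix computation
  have hc : ∀ i, (starRingEnd ℂ) (Complex.exp (Complex.I * s i))
      = Complex.exp (-Complex.I * s i) := by
    intro i
    rw [← Complex.exp_conj]
    congr 1
    simp [Complex.conj_ofReal]
  have hB' : B = fromBlocks (diagonal fun j => Complex.exp (Complex.I * t j) - β j)
      (diagonal fun j => (κ j : ℂ)) (diagonal fun j => (κ j : ℂ))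
      (diagonal fun j => conj (β j) - Complex.exp (-Complex.I * s j)) := by
    rw [hB, diagonal_conjTranspose, diagonal_conjTranspose, diagonal_sub, diagonal_sub]
    simp only [Pi.star_apply, RCLike.star_def, hc]
  have hrank : B.rank = m + Fintype.card {j // ((κ j : ℂ)) ^ 2 -
      (Complex.exp (Complex.I * t j) - β j) *
      (conj (β j) - Complex.exp (-Complex.I * s j)) ≠ 0} :=
    cmv_rank_aux m _ _ _ hkc B hB'
  -- relating the determinant to the scalar condition
  have hxzero : ∀ j, (((κ j : ℂ)) ^ 2 - (Complex.exp (Complex.I * t j) - β j) *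
      (conj (β j) - Complex.exp (-Complex.I * s j)) = 0) ↔
      Complex.exp (Complex.I * t j) * conj (β j) + Complex.exp (-Complex.I * s j) * β j -
        Complex.exp (Complex.I * (t j - s j)) - 1 = 0 := by
    intro j
    have e3 : Complex.exp (Complex.I * t j) * Complex.exp (-Complex.I * s j)
        = Complex.exp (Complex.I * (t j - s j)) := by
      rw [← Complex.exp_add]; congr 1; ring
    have hdet : ((κ j : ℂ)) ^ 2 - (Complex.exp (Complex.I * t j) - β j) *
        (conj (β j) - Complex.exp (-Complex.I * s j)) =
        -(Complex.exp (Complex.I * t j) * conj (β j) +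
          Complex.exp (-Complex.I * s j) * β j -
          Complex.exp (Complex.I * (t j - s j)) - 1) := by
      rw [hkcsq j]
      linear_combination e3
    rw [hdet, neg_eq_zero]
  -- conclusion
  have hrm : B.rank = m ↔ ∀ j,
      Complex.exp (Complex.I * t j) * conj (β j) + Complex.exp (-Complex.I * s j) * β j -
        Complex.exp (Complex.I * (t j - s j)) - 1 = 0 := by
    rw [hrank]
    constructor
    · intro h j
      have hcard : Fintype.card {j // ((κ j : ℂ)) ^ 2 -
          (Complex.exp (Complex.I * t j) - β j) *
          (conj (β j) - Complex.exp (-Complex.I * s j)) ≠ 0} = 0 := by omega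
      rw [Fintype.card_eq_zero_iff] at hcard
      by_contra hcon
      exact hcard.elim ⟨j, fun h0 => hcon ((hxzero j).mp h0)⟩
    · intro h
      have hcard : Fintype.card {j // ((κ j : ℂ)) ^ 2 -
          (Complex.exp (Complex.I * t j) - β j) *
          (conj (β j) - Complex.exp (-Complex.I * s j)) ≠ 0} = 0 := by
        rw [Fintype.card_eq_zero_iff]
        exact ⟨fun ⟨j, hj⟩ => hj ((hxzero j).mpr (h j))⟩
      omega
  refine ⟨hw0, ?_, ?_, hrm⟩
  · rw [hrank]; omega
  · rw [hrm]
    exact forall_congr' fun j => (hscal j).symm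
end

section
/- Let m ∈ ℕ, let α be an m×m complex matrix with ‖α‖ < 1, ρ = (I_m − α*α)^{1/2}, ρ̃ = (I_m − αα*)^{1/2}, let z ∈ ℂ, z ≠ 0, let ε ∈ {+1, −1}, and let P, Q, R, S, P̂, Q̂, R̂, Ŝ be m×m complex matrices satisfying P·Q̂* + Q·P̂* = 2ε·I_m, R·Ŝ* + S·R̂* = −2ε·I_m, P·Ŝ* + Q·R̂* = 0, and R·Q̂* + S·P̂* = 0. Define the odd-step updates P′ = ρ̃^{−1}(αP + zR), R′ = ρ^{−1}(z^{−1}P + α*R), Q′ = ρ̃^{−1}(αQ + zS), S′ = ρ^{−1}(z^{−1}Q + α*S), and P̂′ = ρ̃^{−1}(αP̂ + conj(z)^{−1}R̂), R̂′ = ρ^{−1}(conj(z)·P̂ + α*R̂), Q̂′ = ρ̃^{−1}(αQ̂ + conj(z)^{−1}Ŝ), Ŝ′ = ρ^{−1}(conj(z)·Q̂ + α*Ŝ). Then P′·Q̂′* + Q′·P̂′* = −2ε·I_m, R′·Ŝ′* + S′·R̂′* = 2ε·I_m, P′·Ŝ′* + Q′·R̂′* = 0, and R′·Q̂′* + S′·P̂′*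 = 0. The same four conclusions hold for the even-step updates P′ = ρ^{−1}(α*P + R), R′ = ρ̃^{−1}(P + αR), Q′ = ρ^{−1}(α*Q + S), S′ = ρ̃^{−1}(Q + αS), with P̂′, Q̂′, R̂′, Ŝ′ defined by the same formulas from P̂, Q̂, R̂, Ŝ. -/
open Matrix
open scoped Matrix.Norms.L2Operator ComplexOrder
open ComplexConjugate

private lemma cmv_sandwich_aux {m : ℕ} {ρ1 ρ2 A B Ah Bh : Matrix (Fin m) (Fin m) ℂ} (c : ℂ)
    (h1 : ρ1⁻¹ * ρ1 = 1) (h2 : ρ2 * ρ2⁻¹ = 1) (hH2 : (ρ2⁻¹)ᴴ = ρ2⁻¹)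
    (hkey : A * Ahᴴ + B * Bhᴴ = c • (ρ1 * ρ2)) :
    ρ1⁻¹ * A * (ρ2⁻¹ * Ah)ᴴ + ρ1⁻¹ * B * (ρ2⁻¹ * Bh)ᴴ = c • 1 := by
  rw [conjTranspose_mul, conjTranspose_mul, hH2]
  have e : ρ1⁻¹ * A * (Ahᴴ * ρ2⁻¹) + ρ1⁻¹ * B * (Bhᴴ * ρ2⁻¹)
      = ρ1⁻¹ * (A * Ahᴴ + B * Bhᴴ) * ρ2⁻¹ := by noncomm_ring
  rw [e, hkey, Matrix.mul_smul, Matrix.smul_mul]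
  rw [show ρ1⁻¹ * (ρ1 * ρ2) * ρ2⁻¹ = (ρ1⁻¹ * ρ1) * (ρ2 * ρ2⁻¹) by noncomm_ring, h1, h2, mul_one]

private lemma cmv_sandwich_zero {m : ℕ} {ρ1 ρ2 A B Ah Bh : Matrix (Fin m) (Fin m) ℂ}
    (hH2 : (ρ2⁻¹)ᴴ = ρ2⁻¹)
    (hkey : A * Ahᴴ + B * Bhᴴ = 0) :
    ρ1⁻¹ * A * (ρ2⁻¹ * Ah)ᴴ + ρ1⁻¹ * B * (ρ2⁻¹ * Bh)ᴴ = 0 := by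
  rw [conjTranspose_mul, conjTranspose_mul, hH2]
  have e : ρ1⁻¹ * A * (Ahᴴ * ρ2⁻¹) + ρ1⁻¹ * B * (Bhᴴ * ρ2⁻¹)
      = ρ1⁻¹ * (A * Ahᴴ + B * Bhᴴ) * ρ2⁻¹ := by noncomm_ring
  rw [e, hkey, Matrix.mul_zero, Matrix.zero_mul]

/-- One step of the CMV transfer matrix recursion (odd and even cases) preserves, up to a
sign flip, the four pairing identities between a solution at spectral parameter `z` and
the corresponding hatted solution at the reflected parameter `1/conj z`. -/
theorem cmv_pairing_identities_step (m : ℕ) (α ρ ρt : Matrix (Fin m) (Fin m) ℂ)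
    (hα : ‖α‖ < 1)
    (hρ : ρ.PosSemidef) (hρ2 : ρ * ρ = 1 - αᴴ * α)
    (hρt : ρt.PosSemidef) (hρt2 : ρt * ρt = 1 - α * αᴴ)
    (z : ℂ) (hz : z ≠ 0) (ε : ℂ) (hε : ε = 1 ∨ ε = -1)
    (P Q R S Ph Qh Rh Sh : Matrix (Fin m) (Fin m) ℂ)
    (h1 : P * Qhᴴ + Q * Phᴴ = (2 * ε) • (1 : Matrix (Fin m) (Fin m) ℂ))
    (h2 : R * Shᴴ + S * Rhᴴ = (-(2 * ε)) • (1 : Matrix (Fin m) (Fin m) ℂ))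
    (h3 : P * Shᴴ + Q * Rhᴴ = 0)
    (h4 : R * Qhᴴ + S * Phᴴ = 0) :
    (∀ P' R' Q' S' Ph' Rh' Qh' Sh' : Matrix (Fin m) (Fin m) ℂ,
      P' = ρt⁻¹ * (α * P + z • R) → R' = ρ⁻¹ * (z⁻¹ • P + αᴴ * R) →
      Q' = ρt⁻¹ * (α * Q + z • S) → S' = ρ⁻¹ * (z⁻¹ • Q + αᴴ * S) →
      Ph' = ρt⁻¹ * (α * Ph + (conj z)⁻¹ • Rh) → Rh' = ρ⁻¹ * ((conj z) • Ph + αᴴ * Rh) →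
      Qh' = ρt⁻¹ * (α * Qh + (conj z)⁻¹ • Sh) → Sh' = ρ⁻¹ * ((conj z) • Qh + αᴴ * Sh) →
      P' * Qh'ᴴ + Q' * Ph'ᴴ = (-(2 * ε)) • (1 : Matrix (Fin m) (Fin m) ℂ) ∧
      R' * Sh'ᴴ + S' * Rh'ᴴ = (2 * ε) • (1 : Matrix (Fin m) (Fin m) ℂ) ∧
      P' * Sh'ᴴ + Q' * Rh'ᴴ = 0 ∧
      R' * Qh'ᴴ + S' * Ph'ᴴ = 0) ∧
    (∀ P' R' Q' S' Ph' Rh' Qh' Sh' : Matrix (Fin m) (Fin m) ℂ,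
      P' = ρ⁻¹ * (αᴴ * P + R) → R' = ρt⁻¹ * (P + α * R) →
      Q' = ρ⁻¹ * (αᴴ * Q + S) → S' = ρt⁻¹ * (Q + α * S) →
      Ph' = ρ⁻¹ * (αᴴ * Ph + Rh) → Rh' = ρt⁻¹ * (Ph + α * Rh) →
      Qh' = ρ⁻¹ * (αᴴ * Qh + Sh) → Sh' = ρt⁻¹ * (Qh + α * Sh) →
      P' * Qh'ᴴ + Q' * Ph'ᴴ = (-(2 * ε)) • (1 : Matrix (Fin m) (Fin m) ℂ) ∧
      R' * Sh'ᴴ + S' * Rh'ᴴ = (2 * ε) • (1 : Matrix (Fin m) (Fin m) ℂ) ∧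
      P' * Sh'ᴴ + Q' * Rh'ᴴ = 0 ∧
      R' * Qh'ᴴ + S' * Ph'ᴴ = 0) := by
  -- invertibility of ρ and ρt
  haveI : CompleteSpace (Matrix (Fin m) (Fin m) ℂ) := FiniteDimensional.complete ℂ _
  have hαn : ‖α‖ * ‖α‖ < 1 := by nlinarith [norm_nonneg α]
  have hu1 : IsUnit (1 - αᴴ * α) := by
    have h : ‖αᴴ * α‖ < 1 :=
      lt_of_le_of_lt (le_trans (norm_mul_le _ _)
        (le_of_eq (by rw [Matrix.l2_opNorm_conjTranspose]))) hαn
    exact (Units.oneSub (αᴴ * α) h).isUnit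
  have hu2 : IsUnit (1 - α * αᴴ) := by
    have h : ‖α * αᴴ‖ < 1 :=
      lt_of_le_of_lt (le_trans (norm_mul_le _ _)
        (le_of_eq (by rw [Matrix.l2_opNorm_conjTranspose, mul_comm]))) hαn
    exact (Units.oneSub (α * αᴴ) h).isUnit
  have hρd : IsUnit ρ.det := by
    have := (Matrix.isUnit_iff_isUnit_det _).mp (hρ2 ▸ hu1)
    rw [Matrix.det_mul] at this
    exact isUnit_of_mul_isUnit_left this
  have hρtd : IsUnit ρt.det := by
    have := (Matrix.isUnit_iff_isUnit_det _).mp (hρt2 ▸ hu2)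
    rw [Matrix.det_mul] at this
    exact isUnit_of_mul_isUnit_left this
  have hρl : ρ⁻¹ * ρ = 1 := Matrix.nonsing_inv_mul ρ hρd
  have hρr : ρ * ρ⁻¹ = 1 := Matrix.mul_nonsing_inv ρ hρd
  have hρtl : ρt⁻¹ * ρt = 1 := Matrix.nonsing_inv_mul ρt hρtd
  have hρtr : ρt * ρt⁻¹ = 1 := Matrix.mul_nonsing_inv ρt hρtd
  have hρH : (ρ⁻¹)ᴴ = ρ⁻¹ := by rw [Matrix.conjTranspose_nonsing_inv, hρ.1]
  have hρtH : (ρt⁻¹)ᴴ = ρt⁻¹ := by rw [Matrix.conjTranspose_nonsing_inv, hρt.1]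
  constructor
  · intro P' R' Q' S' Ph' Rh' Qh' Sh' eP eR eQ eS ePh eRh eQh eSh
    subst eP eR eQ eS ePh eRh eQh eSh
    refine ⟨?_, ?_, ?_, ?_⟩
    · refine cmv_sandwich_aux _ hρtl hρtr hρtH ?_
      calc (α * P + z • R) * (α * Qh + (conj z)⁻¹ • Sh)ᴴ
          + (α * Q + z • S) * (α * Ph + (conj z)⁻¹ • Rh)ᴴ
          = α * (P * Qhᴴ + Q * Phᴴ) * αᴴ + z⁻¹ • (α * (P * Shᴴ + Q * Rhᴴ))
            + z • ((R * Qhᴴ + S * Phᴴ) * αᴴ) + (z * z⁻¹) • (R * Shᴴ + S * Rhᴴ) := by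
            simp only [conjTranspose_add, conjTranspose_smul, conjTranspose_mul, add_mul,
              mul_add, Matrix.smul_mul, Matrix.mul_smul, mul_assoc, smul_smul, star_inv₀,
              Complex.star_def, Complex.conj_conj]
            module
        _ = (-(2 * ε)) • (ρt * ρt) := by
            rw [h1, h2, h3, h4, hρt2, mul_inv_cancel₀ hz]
            simp only [Matrix.mul_zero, Matrix.zero_mul, smul_zero, one_smul,
              Matrix.mul_smul, Matrix.smul_mul, mul_one, smul_smul]
            module
    · refine cmv_sandwich_aux _ hρl hρr hρH ?_
      calc (z⁻¹ • P + αᴴ * R) * ((conj z) • Qh + αᴴ * Sh)ᴴ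
          + (z⁻¹ • Q + αᴴ * S) * ((conj z) • Ph + αᴴ * Rh)ᴴ
          = (z⁻¹ * z) • (P * Qhᴴ + Q * Phᴴ) + z⁻¹ • ((P * Shᴴ + Q * Rhᴴ) * α)
            + z • (αᴴ * (R * Qhᴴ + S * Phᴴ)) + αᴴ * (R * Shᴴ + S * Rhᴴ) * α := by
            simp only [conjTranspose_add, conjTranspose_smul, conjTranspose_mul, add_mul,
              mul_add, Matrix.smul_mul, Matrix.mul_smul, mul_assoc, smul_smul,
              conjTranspose_conjTranspose, Complex.star_def, Complex.conj_conj]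
            module
        _ = (2 * ε) • (ρ * ρ) := by
            rw [h1, h2, h3, h4, hρ2, inv_mul_cancel₀ hz]
            simp only [Matrix.mul_zero, Matrix.zero_mul, smul_zero, one_smul,
              Matrix.mul_smul, Matrix.smul_mul, mul_one, smul_smul]
            module
    · refine cmv_sandwich_zero hρH ?_
      calc (α * P + z • R) * ((conj z) • Qh + αᴴ * Sh)ᴴ
          + (α * Q + z • S) * ((conj z) • Ph + αᴴ * Rh)ᴴ
          = z • (α * (P * Qhᴴ + Q * Phᴴ)) + α * (P * Shᴴ + Q * Rhᴴ) * α
            + (z * z) • (R * Qhᴴ + S * Phᴴ) + z • ((R * Shᴴ + S * Rhᴴ) * α) := by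
            simp only [conjTranspose_add, conjTranspose_smul, conjTranspose_mul, add_mul,
              mul_add, Matrix.smul_mul, Matrix.mul_smul, mul_assoc, smul_smul,
              conjTranspose_conjTranspose, Complex.star_def, Complex.conj_conj]
            module
        _ = 0 := by
            rw [h1, h2, h3, h4]
            simp only [Matrix.mul_zero, Matrix.zero_mul, smul_zero,
              Matrix.mul_smul, Matrix.smul_mul, mul_one, one_mul, smul_smul]
            module
    · refine cmv_sandwich_zero hρtH ?_
      calc (z⁻¹ • P + αᴴ * R) * (α * Qh + (conj z)⁻¹ • Sh)ᴴ
          + (z⁻¹ • Q + αᴴ * S) * (α * Ph + (conj z)⁻¹ • Rh)ᴴ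
          = z⁻¹ • ((P * Qhᴴ + Q * Phᴴ) * αᴴ) + (z⁻¹ * z⁻¹) • (P * Shᴴ + Q * Rhᴴ)
            + αᴴ * (R * Qhᴴ + S * Phᴴ) * αᴴ + z⁻¹ • (αᴴ * (R * Shᴴ + S * Rhᴴ)) := by
            simp only [conjTranspose_add, conjTranspose_smul, conjTranspose_mul, add_mul,
              mul_add, Matrix.smul_mul, Matrix.mul_smul, mul_assoc, smul_smul, star_inv₀,
              Complex.star_def, Complex.conj_conj]
            module
        _ = 0 := by
            rw [h1, h2, h3, h4]
            simp only [Matrix.mul_zero, Matrix.zero_mul, smul_zero,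
              Matrix.mul_smul, Matrix.smul_mul, mul_one, one_mul, smul_smul]
            module
  · intro P' R' Q' S' Ph' Rh' Qh' Sh' eP eR eQ eS ePh eRh eQh eSh
    subst eP eR eQ eS ePh eRh eQh eSh
    refine ⟨?_, ?_, ?_, ?_⟩
    · refine cmv_sandwich_aux _ hρl hρr hρH ?_
      calc (αᴴ * P + R) * (αᴴ * Qh + Sh)ᴴ + (αᴴ * Q + S) * (αᴴ * Ph + Rh)ᴴ
          = αᴴ * (P * Qhᴴ + Q * Phᴴ) * α + αᴴ * (P * Shᴴ + Q * Rhᴴ)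
            + (R * Qhᴴ + S * Phᴴ) * α + (R * Shᴴ + S * Rhᴴ) := by
            simp only [conjTranspose_add, conjTranspose_mul, add_mul, mul_add, mul_assoc,
              conjTranspose_conjTranspose]
            module
        _ = (-(2 * ε)) • (ρ * ρ) := by
            rw [h1, h2, h3, h4, hρ2]
            simp only [Matrix.mul_zero, Matrix.zero_mul, add_zero, zero_add,
              Matrix.mul_smul, Matrix.smul_mul, mul_one, one_mul]
            module
    · refine cmv_sandwich_aux _ hρtl hρtr hρtH ?_
      calc (P + α * R) * (Qh + α * Sh)ᴴ + (Q + α * S) * (Ph + α * Rh)ᴴ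
          = (P * Qhᴴ + Q * Phᴴ) + (P * Shᴴ + Q * Rhᴴ) * αᴴ
            + α * (R * Qhᴴ + S * Phᴴ) + α * (R * Shᴴ + S * Rhᴴ) * αᴴ := by
            simp only [conjTranspose_add, conjTranspose_mul, add_mul, mul_add, mul_assoc]
            module
        _ = (2 * ε) • (ρt * ρt) := by
            rw [h1, h2, h3, h4, hρt2]
            simp only [Matrix.mul_zero, Matrix.zero_mul, add_zero, zero_add,
              Matrix.mul_smul, Matrix.smul_mul, mul_one, one_mul]
            module
    · refine cmv_sandwich_zero hρtH ?_
      calc (αᴴ * P + R) * (Qh + α * Sh)ᴴ + (αᴴ * Q + S) * (Ph + α * Rh)ᴴ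
          = αᴴ * (P * Qhᴴ + Q * Phᴴ) + αᴴ * (P * Shᴴ + Q * Rhᴴ) * αᴴ
            + (R * Qhᴴ + S * Phᴴ) + (R * Shᴴ + S * Rhᴴ) * αᴴ := by
            simp only [conjTranspose_add, conjTranspose_mul, add_mul, mul_add, mul_assoc]
            module
        _ = 0 := by
            rw [h1, h2, h3, h4]
            simp only [Matrix.mul_zero, Matrix.zero_mul, add_zero, zero_add,
              Matrix.mul_smul, Matrix.smul_mul, mul_one, one_mul]
            module
    · refine cmv_sandwich_zero hρH ?_
      calc (P + α * R) * (αᴴ * Qh + Sh)ᴴ + (Q + α * S) * (αᴴ * Ph + Rh)ᴴ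
          = (P * Qhᴴ + Q * Phᴴ) * α + (P * Shᴴ + Q * Rhᴴ)
            + α * (R * Qhᴴ + S * Phᴴ) * α + α * (R * Shᴴ + S * Rhᴴ) := by
            simp only [conjTranspose_add, conjTranspose_mul, add_mul, mul_add, mul_assoc,
              conjTranspose_conjTranspose]
            module
        _ = 0 := by
            rw [h1, h2, h3, h4]
            simp only [Matrix.mul_zero, Matrix.zero_mul, add_zero, zero_add,
              Matrix.mul_smul, Matrix.smul_mul, mul_one, one_mul]
            module
end
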